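/- If the induced real linear map A : ℝ^N → ℝ^M is surjective, then the quotient ℤ^M / A(ℤ^N) is a finite group, and the kernel of the monomial map φ_A : (ℂ*)^N → (ℂ*)^M is isomorphic as a group to (ℂ*)^{N−M} × (ℤ^M / A(ℤ^N)). In particular the kernel has exactly |ℤ^M / A(ℤ^N)| connected components. -/

import Mathlib

open Matrix Finset

/-- generalized monomial map -/
private def mmap {α β : Type} [Fintype α] [Fintype β] (B : Matrix β α ℤ) :
    (α → ℂˣ) →* (β → ℂˣ) where
  toFun z := fun j => ∏ i, z i ^ B j i
  map_one' := by funext j; simp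
  map_mul' z w := by funext j; simp [Pi.mul_apply, mul_zpow, Finset.prod_mul_distrib]

private lemma mmap_apply {α β : Type} [Fintype α] [Fintype β] (B : Matrix β α ℤ)
    (z : α → ℂˣ) (j : β) : mmap B z j = ∏ i, z i ^ B j i := rfl

private lemma zpow_finset_sum {G : Type*} [CommGroup G] (x : G) {β : Type*} (s : Finset β)
    (f : β → ℤ) : x ^ (∑ k ∈ s, f k) = ∏ k ∈ s, x ^ f k := by
  classical
  induction s using Finset.induction_on with
  | empty => simp
  | insert a s' h ih => rw [Finset.sum_insert h, Finset.prod_insert h, _root_.zpow_add, ih]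

private lemma mmap_mul {α β γ : Type} [Fintype α] [Fintype β] [Fintype γ]
    (B : Matrix γ β ℤ) (C : Matrix β α ℤ) :
    mmap (B * C) = (mmap B).comp (mmap C) := by
  apply MonoidHom.ext; intro z; funext j
  show ∏ i, z i ^ (B * C) j i = ∏ k, (∏ i, z i ^ C k i) ^ B j k
  have h1 : ∀ k, (∏ i, z i ^ C k i) ^ B j k = ∏ i, z i ^ (B j k * C k i) := by
    intro k
    rw [← Finset.prod_zpow]
    exact Finset.prod_congr rfl fun i _ => by rw [← _root_.zpow_mul, mul_comm]
  simp_rw [h1]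
  rw [Finset.prod_comm]
  refine Finset.prod_congr rfl fun i _ => ?_
  rw [Matrix.mul_apply, zpow_finset_sum]

private lemma mmap_one {α : Type} [Fintype α] [DecidableEq α] :
    mmap (1 : Matrix α α ℤ) = MonoidHom.id _ := by
  apply MonoidHom.ext; intro z; funext j
  show ∏ i, z i ^ (1 : Matrix α α ℤ) j i = z j
  rw [Finset.prod_eq_single j (fun i _ hi => by
    simp [Matrix.one_apply, (Ne.symm hi)]) (by simp)]
  simp [Matrix.one_apply]

private lemma mmap_continuous {α β : Type} [Fintype α] [Fintype β] (B : Matrix β α ℤ) :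
    Continuous (mmap B) := by
  apply continuous_pi
  intro j
  exact continuous_finset_prod _ fun i _ => (continuous_zpow (B j i)).comp (continuous_apply i)

/-- mulEquiv from a pair of mutually inverse integer matrices -/
private def mmapEquiv {α β : Type} [Fintype α] [Fintype β] [DecidableEq α] [DecidableEq β]
    (B : Matrix β α ℤ) (B' : Matrix α β ℤ) (h1 : B * B' = 1) (h2 : B' * B = 1) :
    (α → ℂˣ) ≃* (β → ℂˣ) where
  toFun := mmap B
  invFun := mmap B'
  left_inv z := by
    have : (mmap B').comp (mmap B) = MonoidHom.id _ := by rw [← mmap_mul, h2, mmap_one]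
    exact DFunLike.congr_fun this z
  right_inv z := by
    have : (mmap B).comp (mmap B') = MonoidHom.id _ := by rw [← mmap_mul, h1, mmap_one]
    exact DFunLike.congr_fun this z
  map_mul' := map_mul _

private lemma zpow_eq_one_iff_natAbs (x : ℂˣ) (m : ℤ) : x ^ m = 1 ↔ x ^ m.natAbs = 1 := by
  rcases Int.natAbs_eq m with h | h
  · conv_lhs => rw [h]
    rw [zpow_natCast]
  · conv_lhs => rw [h]
    rw [_root_.zpow_neg, inv_eq_one, zpow_natCast]

private instance : ConnectedSpace ℂˣ := by
  have hc : Continuous fun w : ℂ => Units.mk0 (Complex.exp w) (Complex.exp_ne_zero w) := by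
    rw [Units.continuous_iff]
    constructor
    · exact Complex.continuous_exp
    · have : (fun w : ℂ => ((Units.mk0 (Complex.exp w) (Complex.exp_ne_zero w))⁻¹ : ℂˣ).val)
          = fun w : ℂ => Complex.exp (-w) := by
        funext w
        simp [← Complex.exp_neg]
      rw [show (fun w : ℂ => (Units.val ((Units.mk0 (Complex.exp w) (Complex.exp_ne_zero w))⁻¹)))
        = fun w : ℂ => Complex.exp (-w) from this]
      exact Complex.continuous_exp.comp continuous_neg
  have hs : Function.Surjective fun w : ℂ => Units.mk0 (Complex.exp w) (Complex.exp_ne_zero w) := by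
    intro u
    have : (u : ℂ) ∈ Set.range Complex.exp := by
      rw [Complex.range_exp]; exact u.ne_zero
    obtain ⟨w, hw⟩ := this
    exact ⟨w, Units.ext hw⟩
  exact hs.connectedSpace hc

private lemma coker_equiv {M : ℕ} (L : Submodule ℤ (Fin M → ℤ)) (bM : Module.Basis (Fin M) ℤ (Fin M → ℤ))
    (a : Fin M → ℤ) (h : L = Submodule.span ℤ (Set.range fun j => a j • bM j)) :
    Nonempty (((Fin M → ℤ) ⧸ L) ≃+ ((j : Fin M) → ZMod (a j).natAbs)) := by
  classical
  set e := bM.equivFun with he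
  have hsingle : ∀ j, e (bM j) = Pi.single j 1 := by
    intro j
    funext k
    rw [he, Module.Basis.equivFun_self, Pi.single_apply]
    simp [eq_comm]
  have hmap : L.map (e : (Fin M → ℤ) →ₗ[ℤ] (Fin M → ℤ)) =
      Submodule.pi Set.univ (fun j => Ideal.span {a j}) := by
    rw [h, Submodule.map_span]
    have himg : (e : (Fin M → ℤ) →ₗ[ℤ] (Fin M → ℤ)) '' (Set.range fun j => a j • bM j)
        = Set.range fun j => a j • (Pi.single j 1 : Fin M → ℤ) := by
      rw [← Set.range_comp]
      refine congrArg _ (funext fun j => ?_)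
      show e (a j • bM j) = a j • Pi.single j 1
      rw [_root_.map_smul, hsingle]
    rw [himg]
    apply le_antisymm
    · rw [Submodule.span_le]
      rintro _ ⟨j, rfl⟩
      intro k _
      rcases eq_or_ne j k with rfl | hjk
      · simp only [Pi.smul_apply, Pi.single_eq_same, smul_eq_mul, mul_one]
        exact Ideal.mem_span_singleton_self _
      · simp [Pi.single_eq_of_ne (Ne.symm hjk) , hjk]
    · intro x hx
      have hx' : ∀ j, x j ∈ Ideal.span ({a j} : Set ℤ) := fun j =>
        (Submodule.mem_pi.mp hx) j (Set.mem_univ j)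
      choose c hc using fun j => Ideal.mem_span_singleton'.mp (hx' j)
      have hxe : x = ∑ j, c j • (a j • (Pi.single j 1 : Fin M → ℤ)) := by
        funext k
        rw [Finset.sum_apply]
        rw [Finset.sum_eq_single k (fun j _ hjk => by simp [Pi.single_eq_of_ne (Ne.symm hjk)])
          (by simp)]
        simp [← hc k, mul_comm]
      rw [hxe]
      exact Submodule.sum_mem _ fun j _ =>
        Submodule.smul_mem _ _ (Submodule.subset_span ⟨j, rfl⟩)
  have e1 := Submodule.Quotient.equiv L _ e hmap
  have e2 := Submodule.quotientPi (fun j : Fin M => Ideal.span ({a j} : Set ℤ))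
  exact ⟨(e1.toAddEquiv.trans e2.toAddEquiv).trans
    (AddEquiv.piCongrRight fun j => (Int.quotientSpanEquivZMod (a j)).toAddEquiv)⟩

private lemma coord_sum {M : ℕ} (b : Module.Basis (Fin M) ℤ (Fin M → ℤ)) (i₀ : Fin M)
    (y : Fin M → ℤ) : b.coord i₀ y = ∑ k, y k * b.coord i₀ (Pi.single k 1) := by
  have hy : y = ∑ k, Pi.single k (y k) := (Finset.univ_sum_single y).symm
  conv_lhs => rw [hy]
  rw [map_sum]
  refine Finset.sum_congr rfl fun k _ => ?_
  have : Pi.single k (y k) = y k • (Pi.single k (1:ℤ) : Fin M → ℤ) := by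
    funext m
    rcases eq_or_ne m k with rfl | h
    · simp
    · simp [Pi.single_eq_of_ne h]
  rw [this, _root_.map_smul, smul_eq_mul]

private lemma snf_package {M N : ℕ} (A : Matrix (Fin M) (Fin N) ℤ)
    (hA : Function.Surjective fun x : Fin N → ℝ => (A.map (Int.cast : ℤ → ℝ)).mulVec x) :
    ∃ (V : Matrix (Fin N) (Fin M ⊕ Fin (N - M)) ℤ) (V' : Matrix (Fin M ⊕ Fin (N - M)) (Fin N) ℤ)
      (U : Matrix (Fin M) (Fin M) ℤ) (U' : Matrix (Fin M) (Fin M) ℤ) (a : Fin M → ℤ),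
      V * V' = 1 ∧ V' * V = 1 ∧ U * U' = 1 ∧ U' * U = 1 ∧ (∀ j, a j ≠ 0) ∧
      (U * A * V = Matrix.of fun j t =>
        Sum.elim (fun j' : Fin M => if j' = j then a j else 0) (fun _ => 0) t) ∧
      Nonempty (((Fin M → ℤ) ⧸ LinearMap.range A.mulVecLin) ≃+
        ((j : Fin M) → ZMod (a j).natAbs)) := by
  classical
  set L := LinearMap.range A.mulVecLin with hLdef
  obtain ⟨n, snf⟩ := L.smithNormalForm (Pi.basisFun ℤ (Fin M))
  -- the embedding f is surjective
  have hfsurj : Function.Surjective snf.f := by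
    intro i₀
    by_contra hi₀
    have hi₀' : i₀ ∉ Set.range snf.f := fun ⟨u, hu⟩ => hi₀ ⟨u, hu⟩
    have hker : L ≤ LinearMap.ker (snf.bM.coord i₀) := snf.le_ker_coord_of_notMem_range hi₀'
    set r : Fin M → ℤ := fun k => snf.bM.coord i₀ (Pi.single k 1) with hr
    have h1 : ∀ i : Fin N, ∑ k, A k i * r k = 0 := by
      intro i
      have hmem : A.mulVec (Pi.single i 1) ∈ L := ⟨Pi.single i 1, by rw [Matrix.mulVecLin_apply]⟩
      have h0 := hker hmem
      rw [LinearMap.mem_ker, coord_sum] at h0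
      rw [← h0]
      refine Finset.sum_congr rfl fun k _ => ?_
      congr 1
      rw [Matrix.mulVec_single]
      exact (mul_one _).symm
    obtain ⟨x, hx⟩ := hA (fun k => (r k : ℝ))
    have e1 : ∀ k, (r k : ℝ) = ∑ i, (A k i : ℝ) * x i := by
      intro k
      have := congrFun hx k
      rw [← this]
      simp [Matrix.mulVec, dotProduct, Matrix.map_apply]
    have key : ∑ k, (r k : ℝ) * (r k : ℝ) = 0 := by
      have step1 : ∑ k, (r k : ℝ) * (r k : ℝ)
          = ∑ k, (∑ i, (A k i : ℝ) * x i) * (r k : ℝ) := by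
        refine Finset.sum_congr rfl fun k _ => ?_
        rw [← e1 k]
      rw [step1]
      have step2 : ∑ k, (∑ i, (A k i : ℝ) * x i) * (r k : ℝ)
          = ∑ i, (∑ k, (A k i : ℝ) * (r k : ℝ)) * x i := by
        simp_rw [Finset.sum_mul]
        rw [Finset.sum_comm]
        exact Finset.sum_congr rfl fun i _ => Finset.sum_congr rfl fun k _ => by ring
      rw [step2]
      refine Finset.sum_eq_zero fun i _ => ?_
      have : (∑ k, (A k i : ℝ) * (r k : ℝ)) = ((∑ k, A k i * r k : ℤ) : ℝ) := by push_cast; ring_nf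
      rw [this, h1 i]
      simp
    have hrzero : ∀ k, r k = 0 := by
      intro k
      have := (Finset.sum_eq_zero_iff_of_nonneg
        (fun k _ => mul_self_nonneg ((r k : ℝ)))).mp key k (Finset.mem_univ k)
      have : (r k : ℝ) = 0 := by
        exact mul_self_eq_zero.mp this
      exact_mod_cast this
    have hone : snf.bM.coord i₀ (snf.bM i₀) = 1 := by
      rw [Module.Basis.coord_apply, Module.Basis.repr_self, Finsupp.single_eq_same]
    rw [coord_sum] at hone
    rw [Finset.sum_eq_zero (fun k _ => by
      rw [show (snf.bM.coord i₀) (Pi.single k 1) = r k from rfl, hrzero k, mul_zero])] at hone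
    exact one_ne_zero hone.symm
  -- reindex
  set fe : Fin n ≃ Fin M := Equiv.ofBijective snf.f ⟨snf.f.injective, hfsurj⟩ with hfe
  set bL : Module.Basis (Fin M) ℤ L := snf.bN.reindex fe with hbL
  set a : Fin M → ℤ := snf.a ∘ fe.symm with ha
  have hb : ∀ j, ((bL j : Fin M → ℤ)) = a j • snf.bM j := by
    intro j
    rw [hbL, Module.Basis.reindex_apply]
    rw [snf.snf]
    have : snf.f (fe.symm j) = j := fe.apply_symm_apply j
    rw [this]
    rfl
  have ha0 : ∀ j, a j ≠ 0 := by
    intro j hj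
    have : (bL j : Fin M → ℤ) = 0 := by rw [hb j, hj, zero_smul]
    have hz : bL j = 0 := Subtype.ext this
    exact bL.ne_zero j hz
  -- section
  have hsec : ∀ j, ∃ v : Fin N → ℤ, A.mulVecLin v = (bL j : Fin M → ℤ) := fun j => (bL j).2
  choose s hs using hsec
  -- kernel basis
  set K := LinearMap.ker A.mulVecLin with hK
  obtain ⟨k, bK⟩ := K.basisOfPid (Pi.basisFun ℤ (Fin N))
  set c : (Fin M ⊕ Fin k) → (Fin N → ℤ) := Sum.elim s (fun u => (bK u : Fin N → ℤ)) with hc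
  -- span of kernel basis
  have hspanK : Submodule.span ℤ (Set.range fun u => (bK u : Fin N → ℤ)) = K := by
    have : (fun u => (bK u : Fin N → ℤ)) = (K.subtype ∘ bK) := rfl
    rw [this, Set.range_comp, ← Submodule.map_span, bK.span_eq, Submodule.map_subtype_top]
  -- linear independence
  have liL : LinearIndependent ℤ (fun j => (bL j : Fin M → ℤ)) :=
    bL.linearIndependent.map' L.subtype (Submodule.ker_subtype L)
  have liS : LinearIndependent ℤ s := by
    have : (A.mulVecLin ∘ s) = fun j => (bL j : Fin M → ℤ) := funext hs
    exact LinearIndependent.of_comp A.mulVecLin (this ▸ liL)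
  have liK : LinearIndependent ℤ (fun u => (bK u : Fin N → ℤ)) :=
    bK.linearIndependent.map' K.subtype (Submodule.ker_subtype K)
  have hdisj : Disjoint (Submodule.span ℤ (Set.range s))
      (Submodule.span ℤ (Set.range fun u => (bK u : Fin N → ℤ))) := by
    rw [Submodule.disjoint_def]
    intro x hx1 hx2
    obtain ⟨g, hg⟩ := (Submodule.mem_span_range_iff_exists_fun ℤ).mp hx1
    have hxK : A.mulVecLin x = 0 := by
      rw [hspanK] at hx2
      exact hx2
    have hsum : ∑ j, g j • bL j = 0 := by
      have : ((∑ j, g j • bL j : L) : Fin M → ℤ) = 0 := by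
        push_cast
        simp_rw [← hs, ← _root_.map_smul]
        rw [← map_sum, hg]
        exact hxK
      exact_mod_cast Subtype.ext this
    have hg0 := Fintype.linearIndependent_iff.mp bL.linearIndependent g hsum
    rw [← hg]
    exact Finset.sum_eq_zero fun j _ => by rw [hg0 j, zero_smul]
  have hli : LinearIndependent ℤ c := liS.sum_type liK hdisj
  -- span
  have hspan : ⊤ ≤ Submodule.span ℤ (Set.range c) := by
    intro x _
    set y : L := ⟨A.mulVecLin x, LinearMap.mem_range_self _ x⟩ with hy
    set g : Fin M → ℤ := fun j => bL.repr y j with hg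
    have hyr : ∑ j, g j • bL j = y := bL.sum_repr y
    have hAeq : A.mulVecLin (∑ j, g j • s j) = A.mulVecLin x := by
      rw [map_sum]
      simp_rw [_root_.map_smul, hs]
      have : ∑ j, g j • ((bL j) : Fin M → ℤ) = ((∑ j, g j • bL j : L) : Fin M → ℤ) := by
        push_cast
        rfl
      rw [this, hyr]
    have hxk : x - ∑ j, g j • s j ∈ K := by
      rw [hK, LinearMap.mem_ker, map_sub, hAeq, sub_self]
    have hx1 : (∑ j, g j • s j) ∈ Submodule.span ℤ (Set.range c) :=
      Submodule.sum_mem _ fun j _ =>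
        Submodule.smul_mem _ _ (Submodule.subset_span ⟨Sum.inl j, rfl⟩)
    have hx2 : x - ∑ j, g j • s j ∈ Submodule.span ℤ (Set.range c) := by
      have h' : x - ∑ j, g j • s j ∈
          Submodule.span ℤ (Set.range fun u => (bK u : Fin N → ℤ)) := by
        rw [hspanK]; exact hxk
      refine Submodule.span_mono ?_ h'
      rintro _ ⟨u, rfl⟩
      exact ⟨Sum.inr u, rfl⟩
    have := Submodule.add_mem _ hx1 hx2
    rwa [add_sub_cancel] at this
  set B0 : Module.Basis (Fin M ⊕ Fin k) ℤ (Fin N → ℤ) := Module.Basis.mk hli hspan with hB0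
  have hcard : M + k = N := by
    have := Fintype.card_congr (B0.indexEquiv (Pi.basisFun ℤ (Fin N)))
    simpa using this
  have hk : k = N - M := by omega
  subst hk
  -- matrices
  set V : Matrix (Fin N) (Fin M ⊕ Fin (N - M)) ℤ := (Pi.basisFun ℤ (Fin N)).toMatrix B0 with hV
  set V' : Matrix (Fin M ⊕ Fin (N - M)) (Fin N) ℤ := B0.toMatrix (Pi.basisFun ℤ (Fin N)) with hV'
  set U : Matrix (Fin M) (Fin M) ℤ := snf.bM.toMatrix (Pi.basisFun ℤ (Fin M)) with hU
  set U' : Matrix (Fin M) (Fin M) ℤ := (Pi.basisFun ℤ (Fin M)).toMatrix snf.bM with hU'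
  have hVent : ∀ i t, V i t = c t i := by
    intro i t
    rw [hV, Module.Basis.toMatrix_apply, Pi.basisFun_repr, hB0, Module.Basis.coe_mk]
  have hUrow : ∀ (w : Fin M → ℤ) j, ∑ kk, U j kk * w kk = snf.bM.repr w j := by
    intro w j
    have hw : w = ∑ kk, Pi.single kk (w kk) := (Finset.univ_sum_single w).symm
    conv_rhs => rw [hw]
    rw [map_sum, Finsupp.coe_finset_sum, Finset.sum_apply]
    refine Finset.sum_congr rfl fun kk _ => ?_
    rw [hU, Module.Basis.toMatrix_apply]
    have : Pi.single kk (w kk) = w kk • (Pi.single kk (1:ℤ) : Fin M → ℤ) := by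
      funext m
      rcases eq_or_ne m kk with rfl | h
      · simp
      · simp [Pi.single_eq_of_ne h]
    rw [this, _root_.map_smul]
    simp only [Finsupp.coe_smul, Pi.smul_apply, smul_eq_mul]
    rw [mul_comm]
    congr 2
    simp [Pi.basisFun_apply]
  refine ⟨V, V', U, U', a, Module.Basis.toMatrix_mul_toMatrix_flip _ _,
    Module.Basis.toMatrix_mul_toMatrix_flip _ _, Module.Basis.toMatrix_mul_toMatrix_flip _ _,
    Module.Basis.toMatrix_mul_toMatrix_flip _ _, ha0, ?_, ?_⟩
  · -- the diagonal identity
    rw [Matrix.mul_assoc]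
    ext j t
    rw [Matrix.mul_apply]
    have hAV : ∀ kk, (A * V) kk t = A.mulVec (c t) kk := by
      intro kk
      rw [Matrix.mul_apply]
      simp_rw [hVent]
      rfl
    simp_rw [hAV]
    rw [hUrow (A.mulVec (c t)) j]
    rcases t with j' | u
    · have : A.mulVec (c (Sum.inl j')) = a j' • snf.bM j' := by
        have := hs j'
        rw [Matrix.mulVecLin_apply] at this
        rw [show c (Sum.inl j') = s j' from rfl, this, hb j']
      rw [this, _root_.map_smul]
      simp only [Finsupp.coe_smul, Pi.smul_apply, smul_eq_mul, Module.Basis.repr_self]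
      rw [Finsupp.single_apply]
      by_cases hjj : j' = j
      · subst hjj; simp
      · simp [hjj]
    · have hmem : c (Sum.inr u) ∈ K := (bK u).2
      have : A.mulVec (c (Sum.inr u)) = 0 := by
        rw [← Matrix.mulVecLin_apply]
        exact hmem
      rw [this]
      simp
  · -- cokernel
    refine coker_equiv L snf.bM a ?_
    have : L = Submodule.span ℤ (Set.range fun j => (bL j : Fin M → ℤ)) := by
      have : (fun j => (bL j : Fin M → ℤ)) = (L.subtype ∘ bL) := rfl
      rw [this, Set.range_comp, ← Submodule.map_span, bL.span_eq, Submodule.map_subtype_top]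
    refine this.trans ?_
    exact congrArg (Submodule.span ℤ) (congrArg Set.range (funext fun j => hb j))

private def kerEquiv {G H K : Type*} [Group G] [Group H] [Group K]
    (e : G ≃* H) (f : H →* K) :
    MonoidHom.ker (f.comp e.toMonoidHom) ≃* MonoidHom.ker f where
  toFun x := ⟨e x.1, x.2⟩
  invFun y := ⟨e.symm y.1, by
    have h : f (e (e.symm y.1)) = 1 := by rw [e.apply_symm_apply]; exact y.2
    exact h⟩
  left_inv x := by ext; simp
  right_inv y := by ext; simp
  map_mul' x y := by ext; simp; exact map_mul e x.1 y.1

private noncomputable def ccMap {X Y : Type*} [TopologicalSpace X] [TopologicalSpace Y]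
    (f : X → Y) (hf : Continuous f) : ConnectedComponents X → ConnectedComponents Y :=
  (ConnectedComponents.continuous_coe.comp hf).connectedComponentsLift

private lemma ccMap_coe {X Y : Type*} [TopologicalSpace X] [TopologicalSpace Y] (f : X → Y)
    (hf : Continuous f) (x : X) :
    ccMap f hf (ConnectedComponents.mk x) = ConnectedComponents.mk (f x) :=
  Continuous.connectedComponentsLift_apply_coe _ _

private noncomputable def ccEquiv {X Y : Type*} [TopologicalSpace X] [TopologicalSpace Y]
    (h : X ≃ₜ Y) : ConnectedComponents X ≃ ConnectedComponents Y where
  toFun := ccMap h h.continuous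
  invFun := ccMap h.symm h.symm.continuous
  left_inv := by
    intro u
    obtain ⟨x, rfl⟩ := ConnectedComponents.surjective_coe u
    rw [ccMap_coe, ccMap_coe, h.symm_apply_apply]
  right_inv := by
    intro u
    obtain ⟨y, rfl⟩ := ConnectedComponents.surjective_coe u
    rw [ccMap_coe, ccMap_coe, h.apply_symm_apply]

private lemma cc_card {X T : Type*} [TopologicalSpace X] [TopologicalSpace T]
    [TotallyDisconnectedSpace T] (f : X → T) (hf : Continuous f) (hsurj : Function.Surjective f)
    (hconn : ∀ x y, f x = f y → (ConnectedComponents.mk x = ConnectedComponents.mk y)) :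
    Nonempty (ConnectedComponents X ≃ T) := by
  refine ⟨Equiv.ofBijective hf.connectedComponentsLift ⟨?_, ?_⟩⟩
  · intro u v huv
    obtain ⟨x, rfl⟩ := ConnectedComponents.surjective_coe u
    obtain ⟨y, rfl⟩ := ConnectedComponents.surjective_coe v
    rw [hf.connectedComponentsLift_apply_coe, hf.connectedComponentsLift_apply_coe] at huv
    exact hconn x y huv
  · intro t
    obtain ⟨x, rfl⟩ := hsurj t
    exact ⟨ConnectedComponents.mk x, hf.connectedComponentsLift_apply_coe x⟩

private noncomputable def zmodRootsEquiv (n : ℕ) [NeZero n] :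
    Multiplicative (ZMod n) ≃* (rootsOfUnity n ℂ) :=
  let ζ : ℂ := Complex.exp (2 * Real.pi * Complex.I / n)
  let hζ : IsPrimitiveRoot ζ n := Complex.isPrimitiveRoot_exp n (NeZero.ne n)
  let hu : IsPrimitiveRoot (hζ.isUnit (NeZero.ne n)).unit' n :=
    hζ.isUnit_unit' (NeZero.ne n)
  (AddEquiv.toMultiplicativeLeft hu.zmodEquivZPowers).trans (MulEquiv.subgroupCongr hu.zpowers_eq)

/-- Multiplicative of a pi type -/
private def piMult {ι : Type*} (G : ι → Type*) [∀ i, AddGroup (G i)] :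
    Multiplicative (∀ i, G i) ≃* ∀ i, Multiplicative (G i) where
  toFun x i := Multiplicative.ofAdd (Multiplicative.toAdd x i)
  invFun x := Multiplicative.ofAdd fun i => Multiplicative.toAdd (x i)
  left_inv _ := rfl
  right_inv _ := rfl
  map_mul' _ _ := rfl


/-- The monomial map `φ_A : (ℂ*)^N → (ℂ*)^M`, `φ_A(z)_j = Πᵢ zᵢ^{A_{ji}}`, as a group
homomorphism. -/
def monomialMap {M N : ℕ} (A : Matrix (Fin M) (Fin N) ℤ) :
    (Fin N → ℂˣ) →* (Fin M → ℂˣ) where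
  toFun z := fun j => ∏ i, z i ^ A j i
  map_one' := by funext j; simp
  map_mul' z w := by funext j; simp [Pi.mul_apply, mul_zpow, Finset.prod_mul_distrib]

/-- If the induced real linear map of an integer matrix `A` is surjective,
then `ℤ^M / A(ℤ^N)` is finite, and the kernel of `φ_A` is isomorphic as a group to
`(ℂ*)^{N−M} × (ℤ^M / A(ℤ^N))`; in particular the kernel has exactly `|ℤ^M / A(ℤ^N)|`
connected components. -/
theorem monomial_map_kernel {M N : ℕ} (A : Matrix (Fin M) (Fin N) ℤ)
    (hA : Function.Surjective fun x : Fin N → ℝ => (A.map (Int.cast : ℤ → ℝ)).mulVec x) :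
    Finite ((Fin M → ℤ) ⧸ LinearMap.range (Matrix.mulVecLin A)) ∧
      Nonempty ((MonoidHom.ker (monomialMap A)) ≃*
        ((Fin (N - M) → ℂˣ) ×
          Multiplicative ((Fin M → ℤ) ⧸ LinearMap.range (Matrix.mulVecLin A)))) ∧
      Nat.card (ConnectedComponents (MonoidHom.ker (monomialMap A)))
        = Nat.card ((Fin M → ℤ) ⧸ LinearMap.range (Matrix.mulVecLin A)) := by
  classical
  obtain ⟨V, V', U, U', a, hVV', hV'V, hUU', hU'U, ha0, hdiag, ⟨eQ⟩⟩ := snf_package A hA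
  haveI : ∀ j, NeZero (a j).natAbs := fun j => ⟨Int.natAbs_ne_zero.mpr (ha0 j)⟩
  set Q := ((Fin M → ℤ) ⧸ LinearMap.range (Matrix.mulVecLin A)) with hQ
  have hfin : Finite Q := Finite.of_equiv _ eQ.toEquiv.symm
  set D : Matrix (Fin M) (Fin M ⊕ Fin (N - M)) ℤ := Matrix.of fun j t =>
    Sum.elim (fun j' : Fin M => if j' = j then a j else 0) (fun _ => 0) t with hD
  have hmA : monomialMap A = mmap A := rfl
  -- composition identity
  have hDcomp : ∀ z : (Fin M ⊕ Fin (N - M)) → ℂˣ,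
      mmap D z = mmap U (monomialMap A (mmap V z)) := by
    have h1 : mmap D = ((mmap U).comp (mmap A)).comp (mmap V) := by
      rw [← hdiag, mmap_mul, mmap_mul]
    intro z
    rw [h1, hmA]
    rfl
  have hUU : ∀ w, mmap U' (mmap U w) = w := fun w => DFunLike.congr_fun
    (show (mmap U').comp (mmap U) = MonoidHom.id _ by rw [← mmap_mul, hU'U, mmap_one]) w
  have hVV : ∀ w, mmap V (mmap V' w) = w := fun w => DFunLike.congr_fun
    (show (mmap V).comp (mmap V') = MonoidHom.id _ by rw [← mmap_mul, hVV', mmap_one]) w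
  have hback : ∀ z : (Fin M ⊕ Fin (N - M)) → ℂˣ, mmap D z = 1 →
      monomialMap A (mmap V z) = 1 := by
    intro z hz
    calc monomialMap A (mmap V z) = mmap U' (mmap U (monomialMap A (mmap V z))) := (hUU _).symm
    _ = mmap U' (mmap D z) := by rw [hDcomp]
    _ = 1 := by rw [hz, _root_.map_one]
  have hfwd : ∀ x : Fin N → ℂˣ, monomialMap A x = 1 → mmap D (mmap V' x) = 1 := by
    intro x hx
    rw [hDcomp, hVV, hx, _root_.map_one]
  -- membership in ker (mmap D)
  have hmemD : ∀ z : (Fin M ⊕ Fin (N - M)) → ℂˣ,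
      mmap D z = 1 ↔ ∀ j, z (Sum.inl j) ^ a j = 1 := by
    intro z
    have hcomp : ∀ j, mmap D z j = z (Sum.inl j) ^ a j := by
      intro j
      rw [mmap_apply, Fintype.prod_sum_type]
      have h2 : ∀ u : Fin (N - M), z (Sum.inr u) ^ D j (Sum.inr u) = 1 := fun u => by
        show z (Sum.inr u) ^ (0 : ℤ) = 1
        exact zpow_zero _
      rw [Finset.prod_eq_one fun u _ => h2 u, mul_one]
      rw [Finset.prod_eq_single j (fun j' _ hj' => by
        show z (Sum.inl j') ^ (if j' = j then a j else 0) = 1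
        rw [if_neg hj', zpow_zero]) (fun h => absurd (Finset.mem_univ j) h)]
      show z (Sum.inl j) ^ (if j = j then a j else 0) = _
      rw [if_pos rfl]
    constructor
    · intro h j
      rw [← hcomp j, h]
      rfl
    · intro h
      funext j
      rw [hcomp j, h j]
      rfl
  -- the kernel equivalences
  set eV : ((Fin M ⊕ Fin (N - M)) → ℂˣ) ≃* (Fin N → ℂˣ) := mmapEquiv V V' hVV' hV'V with heV
  have hkereq : MonoidHom.ker ((monomialMap A).comp eV.toMonoidHom)
      = MonoidHom.ker (mmap D) := by
    ext z
    rw [MonoidHom.mem_ker, MonoidHom.mem_ker]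
    constructor
    · intro h
      have : monomialMap A (mmap V z) = 1 := h
      rw [hDcomp, this, _root_.map_one]
    · intro h
      exact hback z h
  set e0 : MonoidHom.ker (mmap D) ≃* MonoidHom.ker (monomialMap A) :=
    (MulEquiv.subgroupCongr hkereq.symm).trans (kerEquiv eV (monomialMap A)) with he0
  -- splitting of ker (mmap D)
  set T' := ((j : Fin M) → rootsOfUnity (a j).natAbs ℂ) with hT'
  have hrootmem : ∀ (z : (Fin M ⊕ Fin (N - M)) → ℂˣ), mmap D z = 1 →
      ∀ j, z (Sum.inl j) ∈ rootsOfUnity (a j).natAbs ℂ := by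
    intro z hz j
    rw [mem_rootsOfUnity]
    exact (zpow_eq_one_iff_natAbs _ _).mp ((hmemD z).mp hz j)
  have helim : ∀ (τ : T') (cf : Fin (N - M) → ℂˣ),
      mmap D (Sum.elim (fun j => ((τ j : ℂˣ))) cf) = 1 := by
    intro τ cf
    rw [hmemD]
    intro j
    show ((τ j : ℂˣ)) ^ a j = 1
    rw [zpow_eq_one_iff_natAbs]
    exact mem_rootsOfUnity _ _ |>.mp (τ j).2
  set ψ : MonoidHom.ker (mmap D) ≃* T' × (Fin (N - M) → ℂˣ) := {
    toFun := fun z => (fun j => ⟨z.1 (Sum.inl j), hrootmem z.1 z.2 j⟩, fun u => z.1 (Sum.inr u)),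
    invFun := fun p => ⟨Sum.elim (fun j => ((p.1 j : ℂˣ))) p.2, helim p.1 p.2⟩,
    left_inv := fun z => by
      apply Subtype.ext
      funext t
      cases t <;> rfl,
    right_inv := fun p => by
      refine Prod.ext ?_ rfl
      funext j
      apply Subtype.ext
      rfl,
    map_mul' := fun z w => rfl } with hψ
  -- Part (b) iso
  have eQmult : Multiplicative Q ≃* T' :=
    (AddEquiv.toMultiplicative eQ).trans ((piMult _).trans
      (MulEquiv.piCongrRight fun j => zmodRootsEquiv _))
  have ebig : MonoidHom.ker (monomialMap A) ≃*
      ((Fin (N - M) → ℂˣ) × Multiplicative Q) :=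
    (e0.symm.trans ψ).trans ((MulEquiv.prodCongr eQmult.symm (MulEquiv.refl _)).trans
      MulEquiv.prodComm)
  refine ⟨hfin, ⟨ebig⟩, ?_⟩
  -- Part (c): connected components
  have hrootmem' : ∀ x : MonoidHom.ker (monomialMap A), ∀ j,
      (mmap V' x.1) (Sum.inl j) ∈ rootsOfUnity (a j).natAbs ℂ :=
    fun x j => hrootmem _ (hfwd x.1 x.2) j
  set f : MonoidHom.ker (monomialMap A) → T' :=
    fun x => fun j => ⟨(mmap V' x.1) (Sum.inl j), hrootmem' x j⟩ with hf
  have hfcont : Continuous f := by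
    apply continuous_pi
    intro j
    apply Continuous.subtype_mk
    exact (continuous_apply (Sum.inl j)).comp
      ((mmap_continuous V').comp continuous_subtype_val)
  have hginker : ∀ (τ : T') (cf : Fin (N - M) → ℂˣ),
      mmap V (Sum.elim (fun j => ((τ j : ℂˣ))) cf) ∈ MonoidHom.ker (monomialMap A) := by
    intro τ cf
    rw [MonoidHom.mem_ker]
    exact hback _ (helim τ cf)
  have hfsurj : Function.Surjective f := by
    intro τ
    refine ⟨⟨mmap V (Sum.elim (fun j => ((τ j : ℂˣ))) (1 : Fin (N - M) → ℂˣ)),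
      hginker τ 1⟩, ?_⟩
    funext j
    apply Subtype.ext
    show (mmap V' (mmap V _)) (Sum.inl j) = _
    have h3 : ∀ w, mmap V' (mmap V w) = w := fun w => DFunLike.congr_fun
      (show (mmap V').comp (mmap V) = MonoidHom.id _ by rw [← mmap_mul, hV'V, mmap_one]) w
    rw [h3]
    rfl
  have h3 : ∀ w, mmap V' (mmap V w) = w := fun w => DFunLike.congr_fun
    (show (mmap V').comp (mmap V) = MonoidHom.id _ by rw [← mmap_mul, hV'V, mmap_one]) w
  have hfconn : ∀ x y, f x = f y →
      (ConnectedComponents.mk x = ConnectedComponents.mk y) := by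
    intro x y hxy
    set g : (Fin (N - M) → ℂˣ) → MonoidHom.ker (monomialMap A) := fun cf =>
      ⟨mmap V (Sum.elim (fun j => ((f x j : ℂˣ))) cf), hginker (f x) cf⟩ with hg
    have hgcont : Continuous g := by
      apply Continuous.subtype_mk
      apply (mmap_continuous V).comp
      apply continuous_pi
      intro t
      cases t with
      | inl j => exact continuous_const
      | inr u => exact continuous_apply u
    have hgx : g (fun u => mmap V' x.1 (Sum.inr u)) = x := by
      apply Subtype.ext
      show mmap V _ = x.1
      have : (Sum.elim (fun j => ((f x j : ℂˣ))) (fun u => mmap V' x.1 (Sum.inr u)))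
          = mmap V' x.1 := by
        funext t
        cases t <;> rfl
      rw [this, hVV]
    have hgy : g (fun u => mmap V' y.1 (Sum.inr u)) = y := by
      apply Subtype.ext
      show mmap V _ = y.1
      have : (Sum.elim (fun j => ((f x j : ℂˣ))) (fun u => mmap V' y.1 (Sum.inr u)))
          = mmap V' y.1 := by
        funext t
        cases t with
        | inl j =>
          show ((f x j : ℂˣ)) = _
          rw [hxy]
        | inr u => rfl
      rw [this, hVV]
    have hpre : IsPreconnected (Set.range g) := (isPreconnected_range hgcont)
    have hxmem : x ∈ Set.range g := ⟨_, hgx⟩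
    have hymem : y ∈ Set.range g := ⟨_, hgy⟩
    rw [ConnectedComponents.coe_eq_coe]
    have hsub := hpre.subset_connectedComponent hxmem
    exact connectedComponent_eq (hsub hymem)
  obtain ⟨ecc⟩ := cc_card f hfcont hfsurj hfconn
  rw [Nat.card_congr ecc]
  calc Nat.card T' = Nat.card (Multiplicative Q) := (Nat.card_congr eQmult.toEquiv).symm
  _ = Nat.card Q := Nat.card_congr Multiplicative.toAdd
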